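/- Let g : ℝᵠ → ℝ be μ-strongly convex and L-smooth with minimizer y*, let 0 < λ ≤ 1/(2L + 2μ) and 0 < β < 1, let y ∈ ℝᵠ, let D ∈ ℝᵠ, and set y⁺ = y - λβD. Then ‖y⁺ - y*‖² ≤ (1 - (μ/2)λβ)‖y - y*‖² - (1/2)λ²β‖D‖² + (4/μ)λβ‖∇g(y) - D‖². -/

import Mathlib

open scoped RealInnerProductSpace

lemma young_aux (μ a e J : ℝ) (hμ : 0 < μ) (ha : 0 ≤ a) (he : 0 ≤ e) (hJ : J ≤ e * a) :
    2 * μ * J ≤ μ ^ 2 / 2 * a ^ 2 + 2 * e ^ 2 := by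
  nlinarith [sq_nonneg (μ * a - 2 * e), mul_le_mul_of_nonneg_left hJ (by positivity : (0:ℝ) ≤ 2 * μ)]

lemma key_ineq (μ L lam β a d e G I J : ℝ) (hμ : 0 < μ) (hμL : μ ≤ L)
    (hlam : 0 < lam) (hlam2 : lam * (2 * L + 2 * μ) ≤ 1) (hβ : 0 < β) (hβ' : β < 1)
    (ha : 0 ≤ a) (hd : 0 ≤ d) (he : 0 ≤ e) (hG : 0 ≤ G)
    (hI1 : μ * a ^ 2 ≤ I) (hI2 : G ^ 2 ≤ L * I) (hJ : J ≤ e * a) (hde : d ≤ G + e) :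
    a ^ 2 - 2 * (lam * β) * (I - J) + (lam * β) ^ 2 * d ^ 2 ≤
      (1 - μ / 2 * lam * β) * a ^ 2 - 1 / 2 * lam ^ 2 * β * d ^ 2
        + 4 / μ * lam * β * e ^ 2 := by
  have hL0 : 0 < L := lt_of_lt_of_le hμ hμL
  have h1 : lam * (L + μ / 2) ≤ 1 / 2 := by nlinarith [mul_pos hlam hμ]
  have h3 : (β + 1 / 2) * (lam * (L + μ / 2)) ≤ (β + 1 / 2) * (1 / 2) :=
    mul_le_mul_of_nonneg_left h1 (by linarith)
  have hcval : (lam * β + lam / 2) * (L + μ / 2) ≤ 3 / 4 := by nlinarith [h3]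
  obtain ⟨c, hc_def⟩ : ∃ c : ℝ, c = lam * β + lam / 2 := ⟨_, rfl⟩
  rw [← hc_def] at hcval
  have hc0 : 0 ≤ c := by rw [hc_def]; positivity
  have hd2a : d ^ 2 ≤ (G + e) ^ 2 := by nlinarith [hde, hd]
  have hcs : L * μ * (G + e) ^ 2 ≤ (L + μ / 2) * (μ * G ^ 2 + 2 * L * e ^ 2) := by
    nlinarith [sq_nonneg (2 * L * e - μ * G)]
  have e1 : c * (L * μ) * d ^ 2 ≤ c * (L * μ) * (G + e) ^ 2 :=
    mul_le_mul_of_nonneg_left hd2a (by positivity)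
  have e2 : c * (L * μ * (G + e) ^ 2) ≤ c * ((L + μ / 2) * (μ * G ^ 2 + 2 * L * e ^ 2)) :=
    mul_le_mul_of_nonneg_left hcs hc0
  have e3 : (c * (L + μ / 2)) * (μ * G ^ 2 + 2 * L * e ^ 2)
      ≤ (3 / 4) * (μ * G ^ 2 + 2 * L * e ^ 2) :=
    mul_le_mul_of_nonneg_right hcval (by positivity)
  have hXpos : (0:ℝ) ≤ μ * G ^ 2 + 2 * L * e ^ 2 := by positivity
  have f4 : c * d ^ 2 * (L * μ) ≤ μ * G ^ 2 + 2 * L * e ^ 2 := by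
    linarith [e1, e2, e3, hXpos]
  have f3 : 2 * μ * J ≤ μ ^ 2 / 2 * a ^ 2 + 2 * e ^ 2 := young_aux μ a e J hμ ha he hJ
  have F1 : L * μ * (μ * a ^ 2) ≤ L * μ * I :=
    mul_le_mul_of_nonneg_left hI1 (by positivity)
  have F2 : μ * G ^ 2 ≤ μ * (L * I) := mul_le_mul_of_nonneg_left hI2 hμ.le
  have F3 : L * (2 * μ * J) ≤ L * (μ ^ 2 / 2 * a ^ 2 + 2 * e ^ 2) :=
    mul_le_mul_of_nonneg_left f3 hL0.le
  have T2 : L * (μ * (μ / 2 * a ^ 2 + c * d ^ 2 - 2 * (I - J))) ≤ L * (4 * e ^ 2) := by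
    linarith [F1, F2, F3, f4]
  have Tμ : μ * (μ / 2 * a ^ 2 + c * d ^ 2 - 2 * (I - J)) ≤ 4 * e ^ 2 :=
    le_of_mul_le_mul_left T2 hL0
  have hX : μ / 2 * a ^ 2 + c * d ^ 2 - 2 * (I - J) ≤ 4 * e ^ 2 / μ := by
    rw [le_div_iff₀ hμ]; linarith [Tμ]
  have hX2 : lam * β * (μ / 2 * a ^ 2 + c * d ^ 2 - 2 * (I - J))
      ≤ lam * β * (4 * e ^ 2 / μ) := mul_le_mul_of_nonneg_left hX (by positivity)
  rw [hc_def] at hX2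
  have hgoal : (1 - μ / 2 * lam * β) * a ^ 2 - 1 / 2 * lam ^ 2 * β * d ^ 2
        + 4 / μ * lam * β * e ^ 2
        - (a ^ 2 - 2 * (lam * β) * (I - J) + (lam * β) ^ 2 * d ^ 2)
      = lam * β * (4 * e ^ 2 / μ)
        - lam * β * (μ / 2 * a ^ 2 + (lam * β + lam / 2) * d ^ 2 - 2 * (I - J)) := by
    ring
  linarith [hX2, hgoal]


lemma descent_lemma {q : ℕ} (g : EuclideanSpace ℝ (Fin q) → ℝ)
    (gradg : EuclideanSpace ℝ (Fin q) → EuclideanSpace ℝ (Fin q))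
    (hgrad : ∀ y, HasGradientAt g (gradg y) y)
    (L : ℝ) (hsmooth : ∀ u w, ‖gradg u - gradg w‖ ≤ L * ‖u - w‖)
    (u w : EuclideanSpace ℝ (Fin q)) :
    g u ≤ g w + ⟪gradg w, u - w⟫ + L / 2 * ‖u - w‖ ^ 2 := by
  set v := u - w with hv
  have hcontg : Continuous gradg := by
    rcases le_or_gt L 0 with hL | hL
    · have : ∀ x x', gradg x = gradg x' := by
        intro x x'
        have h1 := hsmooth x x'
        have h2 : L * ‖x - x'‖ ≤ 0 := mul_nonpos_of_nonpos_of_nonneg hL (norm_nonneg _)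
        have : ‖gradg x - gradg x'‖ = 0 := le_antisymm (h1.trans h2) (norm_nonneg _)
        rwa [norm_eq_zero, sub_eq_zero] at this
      have : gradg = fun _ => gradg 0 := funext fun x => this x 0
      rw [this]; exact continuous_const
    · refine (LipschitzWith.of_dist_le_mul (K := ⟨L, hL.le⟩) ?_).continuous
      intro x x'
      rw [dist_eq_norm, dist_eq_norm]; exact hsmooth x x'
  have hline : ∀ t : ℝ, HasDerivAt (fun t : ℝ => w + t • v) v t := by
    intro t
    simpa using ((hasDerivAt_id t).smul_const v).const_add w
  have hφ : ∀ t : ℝ, HasDerivAt (fun t : ℝ => g (w + t • v)) ⟪gradg (w + t • v), v⟫ t := by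
    intro t
    have h1 := ((hgrad (w + t • v)).hasFDerivAt).comp_hasDerivAt t (hline t)
    simp [InnerProductSpace.toDual_apply_apply] at h1; exact h1
  have hcont : Continuous fun t : ℝ => ⟪gradg (w + t • v), v⟫ :=
    (hcontg.comp (by continuity)).inner continuous_const
  have hint : ∀ a b : ℝ, IntervalIntegrable (fun t : ℝ => ⟪gradg (w + t • v), v⟫)
      MeasureTheory.volume a b := fun a b => hcont.intervalIntegrable a b
  have hftc : g u - g w = ∫ t in (0:ℝ)..1, ⟪gradg (w + t • v), v⟫ := by
    have := intervalIntegral.integral_eq_sub_of_hasDerivAt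
      (f := fun t : ℝ => g (w + t • v)) (fun t _ => hφ t) (hint 0 1)
    simp only [one_smul, zero_smul, add_zero] at this
    have huv : w + v = u := by rw [hv]; abel
    rw [huv] at this
    rw [this]
  have hbound : ∀ t ∈ Set.Icc (0:ℝ) 1,
      ⟪gradg (w + t • v), v⟫ ≤ ⟪gradg w, v⟫ + t * (L * ‖v‖ ^ 2) := by
    intro t ht
    have h1 : ⟪gradg (w + t • v) - gradg w, v⟫ ≤ ‖gradg (w + t • v) - gradg w‖ * ‖v‖ :=
      real_inner_le_norm _ _
    have h2 : ‖gradg (w + t • v) - gradg w‖ ≤ L * (t * ‖v‖) := by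
      have := hsmooth (w + t • v) w
      simpa [norm_smul, Real.norm_eq_abs, abs_of_nonneg ht.1] using this
    have h4 : ⟪gradg (w + t • v) - gradg w, v⟫ = ⟪gradg (w + t • v), v⟫ - ⟪gradg w, v⟫ :=
      inner_sub_left _ _ _
    nlinarith [norm_nonneg v, norm_nonneg (gradg (w + t • v) - gradg w)]
  have hint2 : IntervalIntegrable (fun t : ℝ => ⟪gradg w, v⟫ + t * (L * ‖v‖ ^ 2))
      MeasureTheory.volume 0 1 := (by fun_prop : Continuous _).intervalIntegrable 0 1
  have hmono := intervalIntegral.integral_mono_on zero_le_one (hint 0 1) hint2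
    (fun t ht => hbound t ht)
  have hval : (∫ t in (0:ℝ)..1, (⟪gradg w, v⟫ + t * (L * ‖v‖ ^ 2)))
      = ⟪gradg w, v⟫ + L / 2 * ‖v‖ ^ 2 := by
    rw [intervalIntegral.integral_add (intervalIntegrable_const)
      (((by fun_prop : Continuous fun t : ℝ => t * (L * ‖v‖ ^ 2))).intervalIntegrable 0 1)]
    rw [intervalIntegral.integral_mul_const, integral_id]
    simp; ring
  linarith [hmono, hval.le, hval.ge, hftc.le, hftc.ge]


set_option maxHeartbeats 1000000 in
theorem stmt_3 {q : ℕ} (g : EuclideanSpace ℝ (Fin q) → ℝ)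
    (gradg : EuclideanSpace ℝ (Fin q) → EuclideanSpace ℝ (Fin q))
    (hgrad : ∀ y, HasGradientAt g (gradg y) y)
    (μ L : ℝ) (hμ : 0 < μ)
    (hsc : ∀ y z, g z ≥ g y + ⟪gradg y, z - y⟫ + (μ / 2) * ‖z - y‖ ^ 2)
    (hsmooth : ∀ u w, ‖gradg u - gradg w‖ ≤ L * ‖u - w‖)
    (ystar : EuclideanSpace ℝ (Fin q)) (hmin : ∀ z, g ystar ≤ g z)
    (lam β : ℝ) (hlam : 0 < lam) (hlam' : lam ≤ 1 / (2 * L + 2 * μ))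
    (hβ : 0 < β) (hβ' : β < 1)
    (y D yp : EuclideanSpace ℝ (Fin q)) (hyp : yp = y - (lam * β) • D) :
    ‖yp - ystar‖ ^ 2 ≤ (1 - (μ / 2) * lam * β) * ‖y - ystar‖ ^ 2
      - (1 / 2) * lam ^ 2 * β * ‖D‖ ^ 2 + (4 / μ) * lam * β * ‖gradg y - D‖ ^ 2 := by
  rcases Nat.eq_zero_or_pos q with hq | hq
  · subst hq
    have h0 : ∀ v : EuclideanSpace ℝ (Fin 0), ‖v‖ = 0 := fun v => by
      rw [Subsingleton.elim v 0, norm_zero]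
    rw [h0, h0, h0, h0]
    norm_num
  -- main case
  have hμL : μ ≤ L := by
    set u : EuclideanSpace ℝ (Fin q) := EuclideanSpace.single ⟨0, hq⟩ (1:ℝ) with hu
    have hnu : ‖u - 0‖ = 1 := by rw [sub_zero, hu, EuclideanSpace.norm_single]; norm_num
    have hA := hsc u 0
    have hB := hsc 0 u
    have hs : (0 : EuclideanSpace ℝ (Fin q)) - u = -(u - 0) := by abel
    rw [hs, inner_neg_right, norm_neg, hnu] at hA
    rw [hnu] at hB
    have hC : ⟪gradg u - gradg 0, u - 0⟫ ≤ ‖gradg u - gradg 0‖ * ‖u - 0‖ :=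
      real_inner_le_norm _ _
    have hD' := hsmooth u 0
    rw [inner_sub_left] at hC
    rw [hnu] at hC hD'
    nlinarith [hA, hB, hC, hD']
  have hL0 : 0 < L := lt_of_lt_of_le hμ hμL
  have hLne : L ≠ 0 := ne_of_gt hL0
  have hid : L * L⁻¹ = 1 := mul_inv_cancel₀ hLne
  -- gradient at the minimizer is zero
  have hgs : gradg ystar = 0 := by
    have hmin' : IsLocalMin g ystar := Filter.Eventually.of_forall fun z => hmin z
    have h := hmin'.hasFDerivAt_eq_zero (hgrad ystar).hasFDerivAt
    have h2 : InnerProductSpace.toDual ℝ (EuclideanSpace ℝ (Fin q)) (gradg ystar)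
        = InnerProductSpace.toDual ℝ (EuclideanSpace ℝ (Fin q)) 0 := by
      rw [h, map_zero]
    exact (InnerProductSpace.toDual ℝ (EuclideanSpace ℝ (Fin q))).injective h2
  -- PL inequality : ‖∇g y‖² ≤ 2L (g y − g y*)
  have hP1 : ‖gradg y‖ ^ 2 ≤ 2 * L * (g y - g ystar) := by
    have hsub : (y - L⁻¹ • gradg y) - y = -(L⁻¹ • gradg y) := by abel
    have hdl := descent_lemma g gradg hgrad L hsmooth (y - L⁻¹ • gradg y) y
    rw [hsub, inner_neg_right, real_inner_smul_right, real_inner_self_eq_norm_sq,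
      norm_neg, norm_smul, Real.norm_eq_abs, abs_of_nonneg (inv_nonneg.mpr hL0.le),
      mul_pow] at hdl
    have hm := hmin (y - L⁻¹ • gradg y)
    have key : L⁻¹ * ‖gradg y‖ ^ 2 - L / 2 * (L⁻¹ ^ 2 * ‖gradg y‖ ^ 2) ≤ g y - g ystar := by
      linarith [hdl, hm]
    have key2 : 2 * L * (L⁻¹ * ‖gradg y‖ ^ 2 - L / 2 * (L⁻¹ ^ 2 * ‖gradg y‖ ^ 2))
        ≤ 2 * L * (g y - g ystar) := mul_le_mul_of_nonneg_left key (by positivity)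
    have hrhs : 2 * L * (L⁻¹ * ‖gradg y‖ ^ 2 - L / 2 * (L⁻¹ ^ 2 * ‖gradg y‖ ^ 2))
        = ‖gradg y‖ ^ 2 := by field_simp; ring
    linarith [key2, hrhs.le, hrhs.ge]
  set I : ℝ := ⟪gradg y, y - ystar⟫ with hI_def
  set J : ℝ := ⟪gradg y - D, y - ystar⟫ with hJ_def
  have hneg : ystar - y = -(y - ystar) := by abel
  -- P2
  have hP2 : 2 * L * (g y - g ystar) + ‖gradg y‖ ^ 2 ≤ 2 * L * I := by
    have hsub2 : (ystar + L⁻¹ • gradg y) - ystar = L⁻¹ • gradg y := by abel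
    have hdl2 := descent_lemma g gradg hgrad L hsmooth (ystar + L⁻¹ • gradg y) ystar
    rw [hsub2, hgs, inner_zero_left, norm_smul, Real.norm_eq_abs,
      abs_of_nonneg (inv_nonneg.mpr hL0.le), mul_pow] at hdl2
    have hscy := hsc y (ystar + L⁻¹ • gradg y)
    have hsub3 : (ystar + L⁻¹ • gradg y) - y = (ystar - y) + L⁻¹ • gradg y := by abel
    rw [hsub3, inner_add_right, real_inner_smul_right, real_inner_self_eq_norm_sq,
      hneg, inner_neg_right] at hscy
    have hnn : (0:ℝ) ≤ μ / 2 * ‖-(y - ystar) + L⁻¹ • gradg y‖ ^ 2 := by positivity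
    have key : g y - g ystar + (L⁻¹ * ‖gradg y‖ ^ 2 - L / 2 * (L⁻¹ ^ 2 * ‖gradg y‖ ^ 2))
        ≤ I := by rw [hI_def]; linarith [hdl2, hscy, hnn]
    have key2 := mul_le_mul_of_nonneg_left key (by positivity : (0:ℝ) ≤ 2 * L)
    have hrhs : 2 * L * (L⁻¹ * ‖gradg y‖ ^ 2 - L / 2 * (L⁻¹ ^ 2 * ‖gradg y‖ ^ 2))
        = ‖gradg y‖ ^ 2 := by field_simp; ring
    linarith [key2, hrhs.le, hrhs.ge]
  have hI2 : ‖gradg y‖ ^ 2 ≤ L * I := by linarith [hP1, hP2]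
  -- strong convexity facts
  have hI1 : μ * ‖y - ystar‖ ^ 2 ≤ I := by
    have hS2 := hsc ystar y
    rw [hgs, inner_zero_left] at hS2
    have hS1 := hsc y ystar
    rw [hneg, inner_neg_right, norm_neg] at hS1
    rw [hI_def]; linarith [hS1, hS2]
  have hJle : J ≤ ‖gradg y - D‖ * ‖y - ystar‖ := real_inner_le_norm _ _
  have hde : ‖D‖ ≤ ‖gradg y‖ + ‖gradg y - D‖ := by
    have hDid : D = gradg y - (gradg y - D) := by abel
    calc ‖D‖ = ‖gradg y - (gradg y - D)‖ := by rw [← hDid]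
      _ ≤ ‖gradg y‖ + ‖gradg y - D‖ := norm_sub_le _ _
  -- expansion of the squared norm
  have hIJ : I - J = ⟪y - ystar, D⟫ := by
    rw [hI_def, hJ_def, ← inner_sub_left,
      show gradg y - (gradg y - D) = D from by abel, real_inner_comm]
  have hyp2 : yp - ystar = (y - ystar) - (lam * β) • D := by rw [hyp]; abel
  have hexp : ‖yp - ystar‖ ^ 2
      = ‖y - ystar‖ ^ 2 - 2 * (lam * β) * (I - J) + (lam * β) ^ 2 * ‖D‖ ^ 2 := by
    rw [hyp2, norm_sub_sq_real, real_inner_smul_right, norm_smul, Real.norm_eq_abs,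
      abs_of_nonneg (by positivity : (0:ℝ) ≤ lam * β), mul_pow, hIJ]
    ring
  have hlam2 : lam * (2 * L + 2 * μ) ≤ 1 := by
    rw [le_div_iff₀ (by positivity : (0:ℝ) < 2 * L + 2 * μ)] at hlam'
    exact hlam'
  have hkey := key_ineq μ L lam β ‖y - ystar‖ ‖D‖ ‖gradg y - D‖ ‖gradg y‖ I J
    hμ hμL hlam hlam2 hβ hβ' (norm_nonneg _) (norm_nonneg _) (norm_nonneg _)
    (norm_nonneg _) hI1 hI2 hJle hde
  rw [hexp]
  linarith [hkey]
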